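/- A T1 quasi-metric space is Yoneda-complete if and only if it is sequentially Yoneda-complete. -/

import Mathlib

open scoped NNReal ENNReal

attribute [local instance] Classical.propDecidable

universe u

structure QuasiMetric (X : Type u) where
  d : X → X → ℝ≥0
  eq_iff : ∀ x y, (d x y = 0 ∧ d y x = 0) ↔ x = y
  triangle : ∀ x y z, d x y ≤ d x z + d z y

/-- The order on formal balls: `(x,r) ⊑ (y,s)` iff `d x y ≤ r - s` (real subtraction). -/
def BallLE {X : Type u} (d : X → X → ℝ≥0) (b c : X × ℝ≥0) : Prop :=
  (d b.1 c.1 : ℝ) ≤ (b.2 : ℝ) - (c.2 : ℝ)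

def IsUpperBound {β : Type*} (le : β → β → Prop) (D : Set β) (u : β) : Prop :=
  ∀ a ∈ D, le a u

def IsLub' {β : Type*} (le : β → β → Prop) (D : Set β) (u : β) : Prop :=
  IsUpperBound le D u ∧ ∀ v, IsUpperBound le D v → le u v

def DirectedSubset {β : Type*} (le : β → β → Prop) (D : Set β) : Prop :=
  D.Nonempty ∧ ∀ a ∈ D, ∀ b ∈ D, ∃ c ∈ D, le a c ∧ le b c

/-- `a` is way below `b`. -/
def WayBelow {β : Type*} (le : β → β → Prop) (a b : β) : Prop :=
  ∀ D : Set β, DirectedSubset le D → ∀ s, IsLub' le D s → le b s → ∃ u ∈ D, le a u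

def LeftKCauchyNet {X : Type u} {Λ : Type*} (d : X → X → ℝ≥0) (le : Λ → Λ → Prop)
    (f : Λ → X) : Prop :=
  ∀ ε : ℝ≥0, 0 < ε → ∃ a, ∀ b c, le a b → le b c → d (f b) (f c) < ε

/-- `x` is a Yoneda-limit of the net `f`: for all `y`, `d x y = inf_a sup_{b ≥ a} d (f b) y`
(computed in `ℝ≥0∞` so that the inf/sup always exist). -/
def IsYonedaLimit {X : Type u} {Λ : Type*} (d : X → X → ℝ≥0) (le : Λ → Λ → Prop)
    (f : Λ → X) (x : X) : Prop :=
  ∀ y, (d x y : ℝ≥0∞) = ⨅ a : Λ, ⨆ b : Λ, ⨆ _ : le a b, (d (f b) y : ℝ≥0∞)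

/-- Yoneda completeness: every left K-Cauchy net indexed by a (nonempty, directed,
preordered) index set has a Yoneda-limit. -/
def YonedaComplete {X : Type u} (Q : QuasiMetric X) : Prop :=
  ∀ (Λ : Type u) (le : Λ → Λ → Prop), Nonempty Λ → (∀ a, le a a) →
    (∀ a b c, le a b → le b c → le a c) → (∀ a b, ∃ c, le a c ∧ le b c) →
    ∀ f : Λ → X, LeftKCauchyNet Q.d le f → ∃ x, IsYonedaLimit Q.d le f x

/-- Sequential Yoneda completeness. -/
def SeqYonedaComplete {X : Type u} (Q : QuasiMetric X) : Prop :=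
  ∀ f : ℕ → X, LeftKCauchyNet Q.d (· ≤ ·) f → ∃ x, IsYonedaLimit Q.d (· ≤ ·) f x

theorem stmt6 {X : Type u} (Q : QuasiMetric X) (hT1 : ∀ x y, Q.d x y = 0 → x = y) :
    YonedaComplete Q ↔ SeqYonedaComplete Q := by
  constructor
  · -- easy direction: specialize to ULift ℕ
    intro hY f hf
    obtain ⟨x, hx⟩ := hY (ULift.{u} ℕ) (fun a b => a.down ≤ b.down) ⟨⟨0⟩⟩
      (fun a => le_refl _) (fun a b c hab hbc => le_trans hab hbc)
      (fun a b => ⟨⟨max a.down b.down⟩, le_max_left _ _, le_max_right _ _⟩)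
      (fun a => f a.down)
      (fun ε hε => by
        obtain ⟨a, ha⟩ := hf ε hε
        exact ⟨⟨a⟩, fun b c hb hc => ha b.down c.down hb hc⟩)
    refine ⟨x, fun y => ?_⟩
    rw [hx y]
    refine le_antisymm ?_ ?_
    · exact le_iInf fun n => iInf_le_of_le ⟨n⟩
        (iSup_le fun b => iSup_le fun hb =>
          le_iSup_of_le b.down (le_iSup_of_le hb (le_refl _)))
    · exact le_iInf fun a => iInf_le_of_le a.down
        (iSup_le fun b => iSup_le fun hb =>
          le_iSup_of_le (⟨b⟩ : ULift.{u} ℕ) (le_iSup_of_le hb (le_refl _)))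
  · -- hard direction
    intro h Λ le hne hrefl htrans hdir f hf
    have tri : ∀ a b c : X, (Q.d a c : ℝ≥0∞) ≤ (Q.d a b : ℝ≥0∞) + (Q.d b c : ℝ≥0∞) := by
      intro a b c
      exact_mod_cast Q.triangle a c b
    have hdzz : ∀ z : X, Q.d z z = 0 := fun z => ((Q.eq_iff z z).mpr rfl).1
    have hpow_pos : ∀ n : ℕ, (0 : ℝ≥0) < (2⁻¹ : ℝ≥0) ^ n := fun n => pow_pos (by norm_num) n
    have hpow_anti : ∀ {m n : ℕ}, m ≤ n → ((2⁻¹ : ℝ≥0) ^ n) ≤ (2⁻¹ : ℝ≥0) ^ m :=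
      fun {m n} hmn => pow_le_pow_right_of_le_one' (by norm_num) hmn
    have hpow_small : ∀ ε : ℝ≥0, 0 < ε → ∃ n : ℕ, (2⁻¹ : ℝ≥0) ^ n < ε := by
      intro ε hε
      obtain ⟨n, hn⟩ := exists_pow_lt_of_lt_one (x := (ε : ℝ)) (y := (2⁻¹ : ℝ))
        (by exact_mod_cast hε) (by norm_num)
      exact ⟨n, by exact_mod_cast hn⟩
    have helper : ∀ a b : ℝ≥0∞, (∀ ε : ℝ≥0, 0 < ε → a ≤ b + ε) → a ≤ b := by
      intro a b hab
      exact ENNReal.le_of_forall_pos_le_add fun ε hε _ => hab ε hε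
    -- thresholds
    choose α hα using fun n : ℕ => hf ((2⁻¹ : ℝ≥0) ^ n) (hpow_pos n)
    -- extraction of monotone sequences
    have extract : ∀ lo : ℕ → Λ, ∃ β : ℕ → Λ,
        (∀ n, le (lo n) (β n)) ∧ (∀ m n, m ≤ n → le (β m) (β n)) := by
      intro lo
      choose g hg1 hg2 using hdir
      refine ⟨fun n => Nat.rec (lo 0) (fun n p => g p (lo (n + 1))) n, ?_, ?_⟩
      · intro n
        cases n with
        | zero => exact hrefl _
        | succ k => exact hg2 _ _
      · intro m n hmn
        induction hmn with
        | refl => exact hrefl _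
        | step h' ih => exact htrans _ _ _ ih (hg1 _ _)
    -- any extraction above α gives a left K-Cauchy sequence, hence a Yoneda limit
    have seq_lim : ∀ β : ℕ → Λ, (∀ n, le (α n) (β n)) → (∀ m n, m ≤ n → le (β m) (β n)) →
        ∃ x, IsYonedaLimit Q.d (· ≤ ·) (fun n => f (β n)) x := by
      intro β hβ1 hβ2
      apply h
      intro ε hε
      obtain ⟨n, hn⟩ := hpow_small ε hε
      exact ⟨n, fun p q hp hq => lt_trans
        (hα n (β p) (β q) (htrans _ _ _ (hβ1 n) (hβ2 n p hp)) (hβ2 p q hq)) hn⟩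
    -- domination lemma: the limit of a sequence is below tail-sups of any dominating sequence
    have dom : ∀ (β β' : ℕ → Λ) (x : X), (∀ n, le (α n) (β n)) →
        (∀ n, le (β n) (β' n)) →
        IsYonedaLimit Q.d (· ≤ ·) (fun n => f (β n)) x →
        ∀ w, (Q.d x w : ℝ≥0∞) ≤
          ⨅ n : ℕ, ⨆ k : ℕ, ⨆ _ : n ≤ k, (Q.d (f (β' k)) w : ℝ≥0∞) := by
      intro β β' x hβ1 hββ' hx w
      refine le_iInf fun n0 => helper _ _ fun ε hε => ?_
      obtain ⟨n1, hn1⟩ := hpow_small ε hε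
      set N := max n0 n1 with hN
      have key : (Q.d x w : ℝ≥0∞) ≤
          (⨆ k : ℕ, ⨆ _ : n0 ≤ k, (Q.d (f (β' k)) w : ℝ≥0∞)) + ((2⁻¹ : ℝ≥0) ^ N : ℝ≥0) := by
        calc (Q.d x w : ℝ≥0∞)
            ≤ ⨆ m : ℕ, ⨆ _ : N ≤ m, (Q.d (f (β m)) w : ℝ≥0∞) := by
              rw [hx w]; exact iInf_le _ N
          _ ≤ (⨆ k : ℕ, ⨆ _ : n0 ≤ k, (Q.d (f (β' k)) w : ℝ≥0∞)) + ((2⁻¹ : ℝ≥0) ^ N : ℝ≥0) := by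
              refine iSup_le fun m => iSup_le fun hm => ?_
              have h1 : Q.d (f (β m)) (f (β' m)) < (2⁻¹ : ℝ≥0) ^ m :=
                hα m (β m) (β' m) (hβ1 m) (hββ' m)
              have h2 : (Q.d (f (β' m)) w : ℝ≥0∞) ≤
                  ⨆ k : ℕ, ⨆ _ : n0 ≤ k, (Q.d (f (β' k)) w : ℝ≥0∞) :=
                le_iSup_of_le m (le_iSup_of_le (le_trans (le_max_left _ _) hm) (le_refl _))
              calc (Q.d (f (β m)) w : ℝ≥0∞)
                  ≤ (Q.d (f (β m)) (f (β' m)) : ℝ≥0∞) + (Q.d (f (β' m)) w : ℝ≥0∞) :=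
                    tri _ _ _
                _ ≤ ((2⁻¹ : ℝ≥0) ^ N : ℝ≥0) + (Q.d (f (β' m)) w : ℝ≥0∞) := by
                    gcongr
                    exact_mod_cast le_trans h1.le (hpow_anti hm)
                _ ≤ ((2⁻¹ : ℝ≥0) ^ N : ℝ≥0)
                      + ⨆ k : ℕ, ⨆ _ : n0 ≤ k, (Q.d (f (β' k)) w : ℝ≥0∞) := by gcongr
                _ = _ := add_comm _ _
      refine le_trans key ?_
      gcongr
      exact_mod_cast le_trans (hpow_anti (le_max_right n0 n1)) hn1.le
    -- the main extracted sequence and its limit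
    obtain ⟨β, hβ1, hβ2⟩ := extract α
    obtain ⟨x, hx⟩ := seq_lim β hβ1 hβ2
    -- the net comes cofinally close to x
    have L2 : ∀ (γ : Λ) (ε : ℝ≥0), 0 < ε → ∃ δ, le γ δ ∧ Q.d (f δ) x < ε := by
      intro γ ε hε
      choose u hu1 hu2 using fun n => hdir (α n) (β n)
      choose v hv1 hv2 using fun n => hdir (u n) γ
      obtain ⟨β', hβ'1, hβ'2⟩ := extract v
      have hαβ' : ∀ n, le (α n) (β' n) :=
        fun n => htrans _ _ _ (hu1 n) (htrans _ _ _ (hv1 n) (hβ'1 n))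
      have hββ' : ∀ n, le (β n) (β' n) :=
        fun n => htrans _ _ _ (hu2 n) (htrans _ _ _ (hv1 n) (hβ'1 n))
      have hγβ' : ∀ n, le γ (β' n) := fun n => htrans _ _ _ (hv2 n) (hβ'1 n)
      obtain ⟨x', hx'⟩ := seq_lim β' hαβ' hβ'2
      have hxx' : Q.d x x' = 0 := by
        have h1 := dom β β' x hβ1 hββ' hx x'
        rw [← hx' x'] at h1
        rw [hdzz x'] at h1
        exact_mod_cast le_antisymm h1 zero_le
      have hx_eq : x = x' := hT1 x x' hxx'
      subst hx_eq
      have h0 : (⨅ n : ℕ, ⨆ k : ℕ, ⨆ _ : n ≤ k, (Q.d (f (β' k)) x : ℝ≥0∞)) = 0 := by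
        rw [← hx' x, hdzz x, ENNReal.coe_zero]
      have hlt : (⨅ n : ℕ, ⨆ k : ℕ, ⨆ _ : n ≤ k, (Q.d (f (β' k)) x : ℝ≥0∞)) < (ε : ℝ≥0∞) := by
        rw [h0]
        exact_mod_cast hε
      obtain ⟨n, hn⟩ := iInf_lt_iff.mp hlt
      have hd : (Q.d (f (β' n)) x : ℝ≥0∞) < (ε : ℝ≥0∞) := by
        refine lt_of_le_of_lt (le_trans ?_
          (le_iSup (fun k => ⨆ _ : n ≤ k, (Q.d (f (β' k)) x : ℝ≥0∞)) n)) hn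
        simp
      exact ⟨β' n, hγβ' n, by exact_mod_cast hd⟩
    -- x is a Yoneda limit of the net
    refine ⟨x, fun w => le_antisymm ?_ ?_⟩
    · -- ≤ : net tail-sups dominate d x w
      refine le_iInf fun γ => helper _ _ fun ε hε => ?_
      obtain ⟨n1, hn1⟩ := hpow_small ε hε
      calc (Q.d x w : ℝ≥0∞)
          ≤ ⨆ m : ℕ, ⨆ _ : n1 ≤ m, (Q.d (f (β m)) w : ℝ≥0∞) := by
            rw [hx w]; exact iInf_le _ n1
        _ ≤ (⨆ b : Λ, ⨆ _ : le γ b, (Q.d (f b) w : ℝ≥0∞)) + (ε : ℝ≥0∞) := by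
            refine iSup_le fun m => iSup_le fun hm => ?_
            obtain ⟨δ, hδ1, hδ2⟩ := hdir (β m) γ
            have h1 : Q.d (f (β m)) (f δ) < (2⁻¹ : ℝ≥0) ^ m :=
              hα m (β m) δ (hβ1 m) hδ1
            have h2 : (Q.d (f δ) w : ℝ≥0∞) ≤ ⨆ b : Λ, ⨆ _ : le γ b, (Q.d (f b) w : ℝ≥0∞) :=
              le_iSup_of_le δ (le_iSup_of_le hδ2 (le_refl _))
            calc (Q.d (f (β m)) w : ℝ≥0∞)
                ≤ (Q.d (f (β m)) (f δ) : ℝ≥0∞) + (Q.d (f δ) w : ℝ≥0∞) := tri _ _ _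
              _ ≤ (ε : ℝ≥0∞) + (Q.d (f δ) w : ℝ≥0∞) := by
                  gcongr
                  exact_mod_cast le_trans h1.le (le_trans (hpow_anti hm) hn1.le)
              _ ≤ (ε : ℝ≥0∞) + ⨆ b : Λ, ⨆ _ : le γ b, (Q.d (f b) w : ℝ≥0∞) := by gcongr
              _ = _ := add_comm _ _
    · -- ≥ : net tail-sups are eventually below d x w + ε
      refine helper _ _ fun ε hε => ?_
      obtain ⟨n0, hn0⟩ := hpow_small ε hε
      set n := n0 + 1 with hn
      have hhalf : ((2⁻¹ : ℝ≥0) ^ n) + ((2⁻¹ : ℝ≥0) ^ n) = (2⁻¹ : ℝ≥0) ^ n0 := by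
        have h21 : (2⁻¹ : ℝ≥0) + 2⁻¹ = 1 := by
          rw [← two_mul, mul_inv_cancel₀]
          exact two_ne_zero
        rw [hn, pow_succ, ← mul_add, h21, mul_one]
      calc (⨅ a : Λ, ⨆ b : Λ, ⨆ _ : le a b, (Q.d (f b) w : ℝ≥0∞))
          ≤ ⨆ b : Λ, ⨆ _ : le (α n) b, (Q.d (f b) w : ℝ≥0∞) := iInf_le _ (α n)
        _ ≤ (Q.d x w : ℝ≥0∞) + (ε : ℝ≥0∞) := by
            refine iSup_le fun b => iSup_le fun hb => ?_
            obtain ⟨δ, hδ1, hδ2⟩ := L2 b ((2⁻¹ : ℝ≥0) ^ n) (hpow_pos n)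
            have h1 : Q.d (f b) (f δ) < (2⁻¹ : ℝ≥0) ^ n := hα n b δ hb hδ1
            calc (Q.d (f b) w : ℝ≥0∞)
                ≤ (Q.d (f b) (f δ) : ℝ≥0∞) + (Q.d (f δ) w : ℝ≥0∞) := tri _ _ _
              _ ≤ (Q.d (f b) (f δ) : ℝ≥0∞)
                    + ((Q.d (f δ) x : ℝ≥0∞) + (Q.d x w : ℝ≥0∞)) := by
                  gcongr
                  exact tri _ _ _
              _ ≤ (((2⁻¹ : ℝ≥0) ^ n : ℝ≥0) : ℝ≥0∞)
                    + ((Q.d (f δ) x : ℝ≥0∞) + (Q.d x w : ℝ≥0∞)) := by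
                  gcongr
                  try exact_mod_cast h1.le
              _ ≤ (((2⁻¹ : ℝ≥0) ^ n : ℝ≥0) : ℝ≥0∞)
                    + ((((2⁻¹ : ℝ≥0) ^ n : ℝ≥0) : ℝ≥0∞) + (Q.d x w : ℝ≥0∞)) := by
                  gcongr
                  try exact_mod_cast hδ2.le
              _ = (Q.d x w : ℝ≥0∞) + (((2⁻¹ : ℝ≥0) ^ n + (2⁻¹ : ℝ≥0) ^ n : ℝ≥0) : ℝ≥0∞) := by
                  rw [ENNReal.coe_add]
                  ring
              _ ≤ (Q.d x w : ℝ≥0∞) + (ε : ℝ≥0∞) := by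
                  gcongr
                  exact_mod_cast le_trans hhalf.le hn0.le
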